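/- Let φ be a nonnegative measurable function on the Lorentz cone Λ₃ and let Δ(y) = y₁²−y₂²−y₃². The following are equivalent: (i) ∫_{Λ₃} φ(y) dy < ∞; (ii) there exist α > 1 and a constant C > 0 such that ∫_{Λ₃} Δ(y+t)^{3/2−2α} φ(y) dy ≤ C Δ(t)^{3/2−2α} for every t ∈ Λ₃; (iii) for every α > 1 there exists a constant C > 0 such that ∫_{Λ₃} Δ(y+t)^{3/2−2α} φ(y) dy ≤ C Δ(t)^{3/2−2α} for every t ∈ Λ₃. -/

import Mathlib

open MeasureTheory Set
open scoped ENNReal NNReal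

noncomputable section

/-- The Lorentz cone `Λ₃ = {y ∈ ℝ³ : y₁ + y₂ > 0, y₁² − y₂² − y₃² > 0}`. -/
def Lambda3 : Set (Fin 3 → ℝ) :=
  {y | 0 < y 0 + y 1 ∧ 0 < (y 0) ^ 2 - (y 1) ^ 2 - (y 2) ^ 2}

/-- The determinant function of the Lorentz cone: `Δ(y) = y₁² − y₂² − y₃²`. -/
def DeltaL (y : Fin 3 → ℝ) : ℝ := (y 0) ^ 2 - (y 1) ^ 2 - (y 2) ^ 2

lemma Lambda3.pos0 {y : Fin 3 → ℝ} (hy : y ∈ Lambda3) : 0 < y 0 := by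
  obtain ⟨h1, h2⟩ := hy
  nlinarith [sq_nonneg (y 2)]

lemma Lambda3.deltaL_pos {y : Fin 3 → ℝ} (hy : y ∈ Lambda3) : 0 < DeltaL y := hy.2

lemma measurableSet_Lambda3 : MeasurableSet Lambda3 := by
  have : Lambda3 = {y : Fin 3 → ℝ | 0 < y 0 + y 1} ∩ {y | 0 < (y 0)^2 - (y 1)^2 - (y 2)^2} := rfl
  rw [this]
  exact (measurableSet_lt measurable_const (by fun_prop)).inter
    (measurableSet_lt measurable_const (by fun_prop))

lemma deltaL_add_ge {y t : Fin 3 → ℝ} (hy : y ∈ Lambda3) (ht : t ∈ Lambda3) :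
    DeltaL t ≤ DeltaL (y + t) := by
  have hy0 := Lambda3.pos0 hy
  have ht0 := Lambda3.pos0 ht
  have hy2 := hy.2
  have ht2 := ht.2
  simp only [DeltaL, Pi.add_apply]
  nlinarith [sq_nonneg (y 1 * t 2 - y 2 * t 1), mul_pos hy0 ht0,
    mul_pos hy2 ht2, sq_nonneg (y 1 * t 1 + y 2 * t 2), sq_nonneg (y 0 * t 0 - y 1 * t 1 - y 2 * t 2)]

/-- (i) → (iii). -/
lemma forward (φ : (Fin 3 → ℝ) → ℝ) (hφ : ∀ y, 0 ≤ φ y)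
    (hfin : (∫⁻ y in Lambda3, ENNReal.ofReal (φ y)) < ⊤) :
    ∀ α : ℝ, 1 < α → ∃ C : ℝ, 0 < C ∧ ∀ t ∈ Lambda3,
      (∫⁻ y in Lambda3, ENNReal.ofReal (DeltaL (y + t) ^ (3 / 2 - 2 * α) * φ y))
        ≤ ENNReal.ofReal (C * DeltaL t ^ (3 / 2 - 2 * α)) := by
  intro α hα
  set c : ℝ := 3 / 2 - 2 * α with hc
  have hcneg : c ≤ 0 := by rw [hc]; linarith
  refine ⟨(∫⁻ y in Lambda3, ENNReal.ofReal (φ y)).toReal + 1, by positivity, ?_⟩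
  intro t ht
  set C : ℝ := (∫⁻ y in Lambda3, ENNReal.ofReal (φ y)).toReal + 1 with hC
  have hΔt : 0 < DeltaL t := ht.2
  have step1 : (∫⁻ y in Lambda3, ENNReal.ofReal (DeltaL (y + t) ^ c * φ y))
      ≤ ∫⁻ y in Lambda3, ENNReal.ofReal (DeltaL t ^ c * φ y) := by
    apply setLIntegral_mono' measurableSet_Lambda3
    intro y hy
    apply ENNReal.ofReal_le_ofReal
    apply mul_le_mul_of_nonneg_right _ (hφ y)
    exact Real.rpow_le_rpow_of_nonpos hΔt (deltaL_add_ge hy ht) hcneg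
  have step2 : (∫⁻ y in Lambda3, ENNReal.ofReal (DeltaL t ^ c * φ y))
      = ENNReal.ofReal (DeltaL t ^ c) * ∫⁻ y in Lambda3, ENNReal.ofReal (φ y) := by
    rw [← lintegral_const_mul' _ _ ENNReal.ofReal_ne_top]
    congr 1; funext y
    rw [ENNReal.ofReal_mul (Real.rpow_nonneg hΔt.le _)]
  have step3 : (∫⁻ y in Lambda3, ENNReal.ofReal (φ y)) ≤ ENNReal.ofReal C := by
    rw [← ENNReal.ofReal_toReal hfin.ne]
    exact ENNReal.ofReal_le_ofReal (by rw [hC]; linarith)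
  calc (∫⁻ y in Lambda3, ENNReal.ofReal (DeltaL (y + t) ^ c * φ y))
      ≤ ENNReal.ofReal (DeltaL t ^ c) * ∫⁻ y in Lambda3, ENNReal.ofReal (φ y) := by
        rw [← step2]; exact step1
    _ ≤ ENNReal.ofReal (DeltaL t ^ c) * ENNReal.ofReal C :=
        mul_le_mul_right step3 _
    _ = ENNReal.ofReal (C * DeltaL t ^ c) := by
        rw [← ENNReal.ofReal_mul (Real.rpow_nonneg hΔt.le _), mul_comm]

/-- (ii) → (i). -/
lemma backward (φ : (Fin 3 → ℝ) → ℝ) (hφm : Measurable φ) (hφ : ∀ y, 0 ≤ φ y)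
    (h : ∃ α : ℝ, 1 < α ∧ ∃ C : ℝ, 0 < C ∧ ∀ t ∈ Lambda3,
      (∫⁻ y in Lambda3, ENNReal.ofReal (DeltaL (y + t) ^ (3 / 2 - 2 * α) * φ y))
        ≤ ENNReal.ofReal (C * DeltaL t ^ (3 / 2 - 2 * α))) :
    (∫⁻ y in Lambda3, ENNReal.ofReal (φ y)) < ⊤ := by
  obtain ⟨α, hα, C, hC, hbd⟩ := h
  set c : ℝ := 3 / 2 - 2 * α with hc
  have hcneg : c ≤ 0 := by rw [hc]; linarith
  -- truncated sets
  set S : ℕ → Set (Fin 3 → ℝ) := fun n => Lambda3 ∩ {y | y 0 ≤ (n : ℝ) + 1} with hS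
  have hSm : ∀ n, MeasurableSet (S n) := fun n =>
    measurableSet_Lambda3.inter (measurableSet_le (by fun_prop) measurable_const)
  -- bound on each truncated set
  have key : ∀ n : ℕ, (∫⁻ y in S n, ENNReal.ofReal (φ y)) ≤ ENNReal.ofReal (C / 4 ^ c) := by
    intro n
    set R : ℝ := (n : ℝ) + 1 with hR
    have hRpos : (0 : ℝ) < R := by positivity
    set t : Fin 3 → ℝ := fun i => if i = 0 then R else 0 with htdef
    have ht0 : t 0 = R := rfl
    have ht1 : t 1 = 0 := rfl
    have ht2 : t 2 = 0 := rfl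
    have htmem : t ∈ Lambda3 := by
      constructor
      · simpa [ht0, ht1] using hRpos
      · simp only [ht0, ht1, ht2]; nlinarith
    have hΔt : DeltaL t = R ^ 2 := by simp [DeltaL, ht0, ht1, ht2]
    -- pointwise bound on S n
    have ptwise : ∀ y ∈ S n,
        ENNReal.ofReal ((4 * R ^ 2) ^ c * φ y)
          ≤ ENNReal.ofReal (DeltaL (y + t) ^ c * φ y) := by
      rintro y ⟨hyL, hyb⟩
      apply ENNReal.ofReal_le_ofReal
      apply mul_le_mul_of_nonneg_right _ (hφ y)
      have hy0 := Lambda3.pos0 hyL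
      have hΔy := hyL.2
      have hΔpos : 0 < DeltaL (y + t) := by
        simp only [DeltaL, Pi.add_apply, ht0, ht1, ht2]
        nlinarith
      have hle : DeltaL (y + t) ≤ 4 * R ^ 2 := by
        have hyle : y 0 ≤ R := hyb
        simp only [DeltaL, Pi.add_apply, ht0, ht1, ht2]
        nlinarith [sq_nonneg (y 1), sq_nonneg (y 2)]
      exact Real.rpow_le_rpow_of_nonpos hΔpos hle hcneg
    have h4R : (0 : ℝ) < (4 * R ^ 2) ^ c := Real.rpow_pos_of_pos (by positivity) _
    have chain : ENNReal.ofReal ((4 * R ^ 2) ^ c) * (∫⁻ y in S n, ENNReal.ofReal (φ y))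
        ≤ ENNReal.ofReal (C * (R ^ 2) ^ c) := by
      calc ENNReal.ofReal ((4 * R ^ 2) ^ c) * (∫⁻ y in S n, ENNReal.ofReal (φ y))
          = ∫⁻ y in S n, ENNReal.ofReal ((4 * R ^ 2) ^ c * φ y) := by
            rw [← lintegral_const_mul' _ _ ENNReal.ofReal_ne_top]
            congr 1; funext y
            rw [ENNReal.ofReal_mul h4R.le]
        _ ≤ ∫⁻ y in S n, ENNReal.ofReal (DeltaL (y + t) ^ c * φ y) :=
            setLIntegral_mono' (hSm n) ptwise
        _ ≤ ∫⁻ y in Lambda3, ENNReal.ofReal (DeltaL (y + t) ^ c * φ y) :=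
            lintegral_mono' (Measure.restrict_mono inter_subset_left le_rfl) le_rfl
        _ ≤ ENNReal.ofReal (C * DeltaL t ^ c) := hbd t htmem
        _ = ENNReal.ofReal (C * (R ^ 2) ^ c) := by rw [hΔt]
    have hne0 : ENNReal.ofReal ((4 * R ^ 2) ^ c) ≠ 0 := by
      simp [ENNReal.ofReal_eq_zero, not_le, h4R]
    have chain' : (∫⁻ y in S n, ENNReal.ofReal (φ y)) * ENNReal.ofReal ((4 * R ^ 2) ^ c)
        ≤ ENNReal.ofReal (C * (R ^ 2) ^ c) := by
      rw [mul_comm]; exact chain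
    have := (ENNReal.le_div_iff_mul_le (Or.inl hne0) (Or.inl ENNReal.ofReal_ne_top)).2 chain'
    refine this.trans (le_of_eq ?_)
    rw [← ENNReal.ofReal_div_of_pos h4R]
    have hRc : (0:ℝ) < (R ^ 2) ^ c := Real.rpow_pos_of_pos (by positivity) _
    have h4c : (0:ℝ) < (4:ℝ) ^ c := Real.rpow_pos_of_pos (by norm_num) c
    have hsplit : (4 * R ^ 2 : ℝ) ^ c = 4 ^ c * (R ^ 2) ^ c :=
      Real.mul_rpow (by norm_num) (by positivity)
    rw [hsplit]
    congr 1
    rw [mul_comm ((4:ℝ) ^ c) ((R ^ 2) ^ c), ← div_div, mul_div_assoc, div_self hRc.ne', mul_one]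
  -- pass to the limit
  set f : ℕ → (Fin 3 → ℝ) → ℝ≥0∞ := fun n y => (S n).indicator (fun y => ENNReal.ofReal (φ y)) y
    with hf
  have hfm : ∀ n, Measurable (f n) := fun n =>
    (ENNReal.measurable_ofReal.comp hφm).indicator (hSm n)
  have hfmono : Monotone f := by
    intro m k hmk y
    apply indicator_le_indicator_of_subset
    · refine inter_subset_inter_right _ (fun z hz => ?_)
      have hmk' : (m : ℝ) ≤ (k : ℝ) := Nat.cast_le.2 hmk
      have hz' : z 0 ≤ (m : ℝ) + 1 := hz
      show z 0 ≤ (k : ℝ) + 1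
      linarith
    · intro z; exact zero_le
  have hsup : (fun y => ⨆ n, f n y) = Lambda3.indicator (fun y => ENNReal.ofReal (φ y)) := by
    funext y
    by_cases hy : y ∈ Lambda3
    · obtain ⟨n, hn⟩ := exists_nat_ge (y 0)
      rw [indicator_of_mem hy]
      apply le_antisymm
      · exact iSup_le fun m => indicator_le_self' (fun _ _ => zero_le) y
      · refine le_iSup_of_le n ?_
        have hyS : y ∈ S n := ⟨hy, show y 0 ≤ (n : ℝ) + 1 by linarith⟩
        have heq : f n y = ENNReal.ofReal (φ y) := indicator_of_mem hyS _
        exact heq.ge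
    · rw [indicator_of_notMem hy]
      simp only [hf]
      refine le_antisymm (iSup_le fun n => ?_) (zero_le)
      rw [indicator_of_notMem (fun h => hy h.1)]
  have final : (∫⁻ y in Lambda3, ENNReal.ofReal (φ y)) ≤ ENNReal.ofReal (C / 4 ^ c) := by
    rw [← lintegral_indicator measurableSet_Lambda3, ← hsup, lintegral_iSup hfm hfmono]
    refine iSup_le fun n => ?_
    rw [hf]
    rw [lintegral_indicator (hSm n)]
    exact key n
  exact final.trans_lt ENNReal.ofReal_lt_top

/-- for a nonnegative measurable `φ` on `Λ₃`, the following are equivalent: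
(i) `∫_{Λ₃} φ < ∞`;
(ii) for some `α > 1` there is `C > 0` with
  `∫_{Λ₃} Δ(y+t)^{3/2−2α} φ(y) dy ≤ C Δ(t)^{3/2−2α}` for all `t ∈ Λ₃`;
(iii) the same holds for every `α > 1`. -/
theorem integrable_iff_berezin_bound
    (φ : (Fin 3 → ℝ) → ℝ) (hφm : Measurable φ) (hφ : ∀ y, 0 ≤ φ y) :
    ((∫⁻ y in Lambda3, ENNReal.ofReal (φ y)) < ⊤ ↔
      (∃ α : ℝ, 1 < α ∧ ∃ C : ℝ, 0 < C ∧ ∀ t ∈ Lambda3,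
        (∫⁻ y in Lambda3, ENNReal.ofReal (DeltaL (y + t) ^ (3 / 2 - 2 * α) * φ y))
          ≤ ENNReal.ofReal (C * DeltaL t ^ (3 / 2 - 2 * α)))) ∧
    ((∫⁻ y in Lambda3, ENNReal.ofReal (φ y)) < ⊤ ↔
      (∀ α : ℝ, 1 < α → ∃ C : ℝ, 0 < C ∧ ∀ t ∈ Lambda3,
        (∫⁻ y in Lambda3, ENNReal.ofReal (DeltaL (y + t) ^ (3 / 2 - 2 * α) * φ y))
          ≤ ENNReal.ofReal (C * DeltaL t ^ (3 / 2 - 2 * α)))) := by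

  constructor
  · constructor
    · intro hfin
      exact ⟨2, by norm_num, forward φ hφ hfin 2 (by norm_num)⟩
    · exact backward φ hφm hφ
  · constructor
    · exact forward φ hφ
    · intro h
      exact backward φ hφm hφ ⟨2, by norm_num, h 2 (by norm_num)⟩
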